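/- Let 0 < α ≤ β ≤ 1 and let X be a real random variable. Then Σ_{m,n ≥ 1} P(|X| > m^α n^β) < ∞ if and only if E|X|^{1/α} < ∞ when α < β, respectively E|X|^{1/α} log^+|X| < ∞ when α = β. -/

import Mathlib

open MeasureTheory ProbabilityTheory Filter Finset Topology

open scoped ENNReal NNReal

/-- `logPlus x = max (log x) 1`. -/
noncomputable def logPlus (x : ℝ) : ℝ := max (Real.log x) 1

namespace TailAux

noncomputable def cnt (γ : ℝ) (y : ℝ) : ℝ≥0∞ :=
  ∑' n : ℕ, (⌈y / ((n : ℝ) + 1) ^ γ - 1⌉₊ : ℝ≥0∞)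

noncomputable def Cconst (γ : ℝ) : ℝ≥0∞ :=
  ∑' n : ℕ, ENNReal.ofReal (((n : ℝ) + 1) ^ (-γ))

lemma tsum_ite_lt (s : ℝ) :
    ∑' m : ℕ, (if (m : ℝ) < s then (1 : ℝ≥0∞) else 0) = (⌈s⌉₊ : ℝ≥0∞) := by
  simp_rw [← Nat.lt_ceil]
  rw [tsum_eq_sum (s := Finset.range ⌈s⌉₊) (by
    intro b hb
    rw [Finset.mem_range] at hb
    simp [hb])]
  rw [Finset.sum_congr rfl (fun m hm => if_pos (Finset.mem_range.mp hm))]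
  simp

lemma ceil_sub_one_le_ofReal (s : ℝ) :
    ((⌈s - 1⌉₊ : ℕ) : ℝ≥0∞) ≤ ENNReal.ofReal s := by
  rcases le_or_gt s 1 with h | h
  · have : ⌈s - 1⌉₊ = 0 := Nat.ceil_eq_zero.mpr (by linarith)
    simp [this]
  · have h1 : (⌈s - 1⌉₊ : ℝ) ≤ s := by
      have := Nat.ceil_lt_add_one (show (0:ℝ) ≤ s - 1 by linarith)
      linarith
    rw [← ENNReal.ofReal_natCast]
    exact ENNReal.ofReal_le_ofReal h1

lemma ofReal_le_ceil (s : ℝ) :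
    ENNReal.ofReal s ≤ ((⌈s⌉₊ : ℕ) : ℝ≥0∞) := by
  rw [← ENNReal.ofReal_natCast]
  exact ENNReal.ofReal_le_ofReal (Nat.le_ceil s)

lemma cnt_ge (γ : ℝ) (y : ℝ) : ENNReal.ofReal (y - 1) ≤ cnt γ y := by
  have h0 : (((0 : ℕ) : ℝ) + 1) ^ γ = 1 := by norm_num
  refine le_trans ?_ (ENNReal.le_tsum 0)
  rw [h0, div_one]
  exact ofReal_le_ceil _

lemma Cconst_lt_top {γ : ℝ} (hγ : 1 < γ) : Cconst γ < ⊤ := by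
  have hs0 : Summable (fun n : ℕ => (n : ℝ) ^ (-γ)) :=
    Real.summable_nat_rpow.mpr (by linarith)
  have hs : Summable (fun n : ℕ => ((n : ℝ) + 1) ^ (-γ)) := by
    have := (summable_nat_add_iff 1).mpr hs0
    simpa [Nat.cast_add] using this
  rw [Cconst, ← ENNReal.ofReal_tsum_of_nonneg
    (fun n => Real.rpow_nonneg (by positivity) _) hs]
  exact ENNReal.ofReal_lt_top

lemma cnt_le_of_one_lt {γ : ℝ} (hγ : 0 < γ) {y : ℝ} (hy : 0 ≤ y) :
    cnt γ y ≤ ENNReal.ofReal y * Cconst γ := by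
  rw [cnt, Cconst, ← ENNReal.tsum_mul_left]
  refine ENNReal.tsum_le_tsum fun n => ?_
  have hn : (0:ℝ) < ((n : ℝ) + 1) ^ γ := Real.rpow_pos_of_pos (by positivity) _
  refine le_trans (ceil_sub_one_le_ofReal _) ?_
  rw [← ENNReal.ofReal_mul hy]
  refine ENNReal.ofReal_le_ofReal ?_
  rw [Real.rpow_neg (by positivity), div_eq_mul_inv]

lemma harmonic_real (K : ℕ) : (harmonic K : ℝ) = ∑ n ∈ Finset.range K, ((n : ℝ) + 1)⁻¹ := by
  rw [harmonic]
  push_cast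
  rfl

lemma cnt_one_le {y : ℝ} (hy : 0 ≤ y) :
    cnt 1 y ≤ ENNReal.ofReal (2 * y * max (Real.log y) 1) := by
  rcases le_or_gt y 1 with h1 | h1
  · have hc : cnt 1 y = 0 := by
      rw [cnt, ENNReal.tsum_eq_zero]
      intro n
      have hn0 : (0:ℝ) ≤ (n:ℝ) := n.cast_nonneg
      have hpos : (0:ℝ) < (n:ℝ) + 1 := by positivity
      have : y / ((n : ℝ) + 1) ^ (1:ℝ) - 1 ≤ 0 := by
        rw [Real.rpow_one, sub_nonpos, div_le_one hpos]
        linarith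
      rw [Nat.ceil_eq_zero.mpr this, Nat.cast_zero]
    simp [hc]
  · set K := ⌈y - 1⌉₊ with hK
    have hK1 : 1 ≤ K := Nat.ceil_pos.mpr (by linarith)
    have hKy : (K : ℝ) ≤ y := by
      have := Nat.ceil_lt_add_one (show (0:ℝ) ≤ y - 1 by linarith)
      simp only [← hK] at this
      linarith
    have hzero : ∀ n ∉ Finset.range K, (⌈y / ((n : ℝ) + 1) ^ (1:ℝ) - 1⌉₊ : ℝ≥0∞) = 0 := by
      intro n hn
      rw [Finset.mem_range, not_lt] at hn
      have hyn : y - 1 ≤ (n : ℝ) := by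
        refine le_trans (Nat.le_ceil _) ?_
        exact_mod_cast hn
      have hpos : (0:ℝ) < (n:ℝ) + 1 := by positivity
      have : y / ((n : ℝ) + 1) ^ (1:ℝ) - 1 ≤ 0 := by
        rw [Real.rpow_one, sub_nonpos, div_le_one hpos]
        linarith [hyn]
      rw [Nat.ceil_eq_zero.mpr this, Nat.cast_zero]
    rw [cnt, tsum_eq_sum hzero]
    calc ∑ n ∈ Finset.range K, (⌈y / ((n : ℝ) + 1) ^ (1:ℝ) - 1⌉₊ : ℝ≥0∞)
        ≤ ∑ n ∈ Finset.range K, ENNReal.ofReal (y / ((n : ℝ) + 1)) := by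
          refine Finset.sum_le_sum fun n _ => ?_
          rw [Real.rpow_one]
          exact ceil_sub_one_le_ofReal _
      _ = ENNReal.ofReal (∑ n ∈ Finset.range K, y / ((n : ℝ) + 1)) := by
          rw [ENNReal.ofReal_sum_of_nonneg]
          intro n _
          positivity
      _ ≤ ENNReal.ofReal (2 * y * max (Real.log y) 1) := by
          refine ENNReal.ofReal_le_ofReal ?_
          have hsum : ∑ n ∈ Finset.range K, y / ((n : ℝ) + 1) = y * (harmonic K : ℝ) := by
            rw [harmonic_real, Finset.mul_sum]
            refine Finset.sum_congr rfl fun n _ => ?_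
            rw [div_eq_mul_inv]
          rw [hsum]
          have hh : (harmonic K : ℝ) ≤ 1 + Real.log K := harmonic_le_one_add_log K
          have hlog : Real.log K ≤ Real.log y := Real.log_le_log (by exact_mod_cast hK1) hKy
          have h2 : (harmonic K : ℝ) ≤ 2 * max (Real.log y) 1 := by
            have := le_max_left (Real.log y) 1
            have := le_max_right (Real.log y) 1
            linarith
          calc y * (harmonic K : ℝ) ≤ y * (2 * max (Real.log y) 1) :=
                mul_le_mul_of_nonneg_left h2 hy
            _ = 2 * y * max (Real.log y) 1 := by ring

lemma cnt_one_ge {y : ℝ} (hy : 1 ≤ y) :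
    ENNReal.ofReal (y * Real.log y / 2 - y) ≤ cnt 1 y := by
  set L := ⌊Real.sqrt y⌋₊ with hL
  have hy0 : (0:ℝ) ≤ y := by linarith
  have hsq1 : 1 ≤ Real.sqrt y := by
    rw [show (1:ℝ) = Real.sqrt 1 by simp]
    exact Real.sqrt_le_sqrt hy
  have hL1 : 1 ≤ L := Nat.le_floor (by exact_mod_cast hsq1)
  have hLsq : (L : ℝ) ≤ Real.sqrt y := Nat.floor_le (by positivity)
  have hsqy : Real.sqrt y ≤ y := by
    have h2 : Real.sqrt y ≤ Real.sqrt (y ^ 2) := Real.sqrt_le_sqrt (by nlinarith)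
    rwa [Real.sqrt_sq hy0] at h2
  have hterm : ∀ n ∈ Finset.range L, (0:ℝ) ≤ y / ((n : ℝ) + 1) - 1 := by
    intro n hn
    rw [Finset.mem_range] at hn
    have hn1 : (n : ℝ) + 1 ≤ L := by exact_mod_cast Nat.succ_le_of_lt hn
    have hpos : (0:ℝ) < (n : ℝ) + 1 := by positivity
    rw [sub_nonneg, le_div_iff₀ hpos]
    nlinarith
  calc ENNReal.ofReal (y * Real.log y / 2 - y)
      ≤ ENNReal.ofReal (∑ n ∈ Finset.range L, (y / ((n : ℝ) + 1) - 1)) := by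
        refine ENNReal.ofReal_le_ofReal ?_
        have hsum : ∑ n ∈ Finset.range L, (y / ((n : ℝ) + 1) - 1)
            = y * (harmonic L : ℝ) - L := by
          rw [Finset.sum_sub_distrib, harmonic_real, Finset.mul_sum]
          simp [div_eq_mul_inv]
        rw [hsum]
        have hh : Real.log ((L:ℝ) + 1) ≤ (harmonic L : ℝ) := by
          have := log_add_one_le_harmonic L
          push_cast at this
          exact this
        have hsqL : Real.sqrt y ≤ (L : ℝ) + 1 := le_of_lt (Nat.lt_floor_add_one _)
        have hlog : Real.log (Real.sqrt y) ≤ Real.log ((L : ℝ) + 1) :=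
          Real.log_le_log (by positivity) hsqL
        have hls : Real.log (Real.sqrt y) = Real.log y / 2 := Real.log_sqrt hy0
        have hlogy : Real.log y / 2 ≤ (harmonic L : ℝ) := by
          rw [← hls]
          refine hlog.trans ?_
          exact_mod_cast hh
        have hLy : (L : ℝ) ≤ y := hLsq.trans hsqy
        have h1 : y * (Real.log y / 2) ≤ y * (harmonic L : ℝ) :=
          mul_le_mul_of_nonneg_left hlogy hy0
        nlinarith
    _ = ∑ n ∈ Finset.range L, ENNReal.ofReal (y / ((n : ℝ) + 1) - 1) :=
        ENNReal.ofReal_sum_of_nonneg hterm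
    _ ≤ ∑ n ∈ Finset.range L, (⌈y / ((n : ℝ) + 1) ^ (1:ℝ) - 1⌉₊ : ℝ≥0∞) := by
        refine Finset.sum_le_sum fun n _ => ?_
        rw [Real.rpow_one]
        exact ofReal_le_ceil _
    _ ≤ cnt 1 y := ENNReal.sum_le_tsum _

end TailAux

theorem tail_series_iff_moment
    {Ω : Type*} [MeasureSpace Ω] [IsProbabilityMeasure (ℙ : Measure Ω)]
    (α β : ℝ) (hα0 : 0 < α) (hαβ : α ≤ β) (hβ1 : β ≤ 1)
    (X : Ω → ℝ) (hmeas : Measurable X) :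
    (∑' m : ℕ, ∑' n : ℕ,
        ℙ {ω | ((m : ℝ) + 1) ^ α * ((n : ℝ) + 1) ^ β < |X ω|} < ⊤)
    ↔ ((α < β → Integrable (fun ω => |X ω| ^ (1 / α)) ℙ)
        ∧ (α = β → Integrable (fun ω => |X ω| ^ (1 / α) * logPlus |X ω|) ℙ)) := by
  classical
  have hα1 : α ≤ 1 := hαβ.trans hβ1
  have hαinv : (1:ℝ) ≤ 1 / α := by
    rw [le_div_iff₀ hα0]; linarith
  set γ : ℝ := β / α with hγdef
  set Z : Ω → ℝ := fun ω => |X ω| ^ (1 / α) with hZdef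
  have hZ0 : ∀ ω, 0 ≤ Z ω := fun ω => Real.rpow_nonneg (abs_nonneg _) _
  have hZmeas : Measurable Z :=
    (Real.continuous_rpow_const (by positivity : (0:ℝ) ≤ 1/α)).measurable.comp hmeas.abs
  -- condition equivalence
  have hcond : ∀ (ω : Ω) (m n : ℕ),
      (((m : ℝ) + 1) ^ α * ((n : ℝ) + 1) ^ β < |X ω|) ↔
        ((m : ℝ) < Z ω / ((n : ℝ) + 1) ^ γ - 1) := by
    intro ω m n
    have hm0 : (0:ℝ) ≤ (m : ℝ) + 1 := by positivity
    have hn0 : (0:ℝ) ≤ (n : ℝ) + 1 := by positivity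
    have hcpos : (0:ℝ) < ((n : ℝ) + 1) ^ γ := Real.rpow_pos_of_pos (by positivity) _
    have h1 : (((m : ℝ) + 1) ^ α * ((n : ℝ) + 1) ^ β < |X ω|) ↔
        ((((m : ℝ) + 1) ^ α * ((n : ℝ) + 1) ^ β) ^ (1/α) < |X ω| ^ (1/α)) :=
      (Real.rpow_lt_rpow_iff
        (by positivity) (abs_nonneg _) (by positivity)).symm
    have h2 : (((m : ℝ) + 1) ^ α * ((n : ℝ) + 1) ^ β) ^ (1/α)
        = ((m : ℝ) + 1) * ((n : ℝ) + 1) ^ γ := by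
      rw [Real.mul_rpow (by positivity) (by positivity),
        ← Real.rpow_mul hm0, ← Real.rpow_mul hn0,
        mul_one_div, div_self hα0.ne', mul_one_div, Real.rpow_one]
    rw [h1, h2, hZdef]
    rw [show ((m:ℝ) < |X ω| ^ (1/α) / ((n : ℝ) + 1) ^ γ - 1) ↔
        ((m:ℝ) + 1 < |X ω| ^ (1/α) / ((n : ℝ) + 1) ^ γ) from lt_sub_iff_add_lt,
      lt_div_iff₀ hcpos]
  -- measurability of the events
  have hms : ∀ m n : ℕ,
      MeasurableSet {ω | ((m : ℝ) + 1) ^ α * ((n : ℝ) + 1) ^ β < |X ω|} :=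
    fun m n => measurableSet_lt measurable_const hmeas.abs
  -- the series equals a lintegral of cnt
  have hSeq : (∑' m : ℕ, ∑' n : ℕ,
      ℙ {ω | ((m : ℝ) + 1) ^ α * ((n : ℝ) + 1) ^ β < |X ω|})
      = ∫⁻ ω, TailAux.cnt γ (Z ω) ∂ℙ := by
    have hind : ∀ m n : ℕ,
        ℙ {ω | ((m : ℝ) + 1) ^ α * ((n : ℝ) + 1) ^ β < |X ω|}
        = ∫⁻ ω, Set.indicator {ω | ((m : ℝ) + 1) ^ α * ((n : ℝ) + 1) ^ β < |X ω|}
            (1 : Ω → ℝ≥0∞) ω ∂ℙ := by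
      intro m n
      rw [lintegral_indicator_one (hms m n)]
    calc (∑' m : ℕ, ∑' n : ℕ,
        ℙ {ω | ((m : ℝ) + 1) ^ α * ((n : ℝ) + 1) ^ β < |X ω|})
        = ∑' m : ℕ, ∑' n : ℕ, ∫⁻ ω,
            Set.indicator {ω | ((m : ℝ) + 1) ^ α * ((n : ℝ) + 1) ^ β < |X ω|}
              (1 : Ω → ℝ≥0∞) ω ∂ℙ := by
          exact tsum_congr fun m => tsum_congr fun n => hind m n
      _ = ∑' m : ℕ, ∫⁻ ω, ∑' n : ℕ,
            Set.indicator {ω | ((m : ℝ) + 1) ^ α * ((n : ℝ) + 1) ^ β < |X ω|}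
              (1 : Ω → ℝ≥0∞) ω ∂ℙ := by
          refine tsum_congr fun m => ?_
          rw [lintegral_tsum fun n =>
            ((measurable_one.indicator (hms m n)).aemeasurable)]
      _ = ∫⁻ ω, ∑' m : ℕ, ∑' n : ℕ,
            Set.indicator {ω | ((m : ℝ) + 1) ^ α * ((n : ℝ) + 1) ^ β < |X ω|}
              (1 : Ω → ℝ≥0∞) ω ∂ℙ := by
          rw [lintegral_tsum fun m =>
            (Measurable.ennreal_tsum fun n =>
              (measurable_one.indicator (hms m n))).aemeasurable]
      _ = ∫⁻ ω, TailAux.cnt γ (Z ω) ∂ℙ := by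
          refine lintegral_congr fun ω => ?_
          rw [ENNReal.tsum_comm, TailAux.cnt]
          refine tsum_congr fun n => ?_
          have : ∀ m : ℕ,
              Set.indicator {ω | ((m : ℝ) + 1) ^ α * ((n : ℝ) + 1) ^ β < |X ω|}
                (1 : Ω → ℝ≥0∞) ω
              = (if (m : ℝ) < Z ω / ((n : ℝ) + 1) ^ γ - 1 then (1:ℝ≥0∞) else 0) := by
            intro m
            rw [Set.indicator_apply]
            simp only [Set.mem_setOf_eq, hcond ω m n, Pi.one_apply]
          rw [tsum_congr this, TailAux.tsum_ite_lt]
  have hγpos : 0 < γ := div_pos (lt_of_lt_of_le hα0 hαβ) hα0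
  have hlp1 : ∀ x : ℝ, (1:ℝ) ≤ logPlus x := fun x => le_max_right _ _
  have key : ∀ ω, Real.log (Z ω) = (1/α) * Real.log |X ω| := by
    intro ω
    rcases (abs_nonneg (X ω)).eq_or_lt with h0 | h0
    · rw [hZdef]
      simp only
      rw [← h0, Real.zero_rpow (by positivity : (0:ℝ) < 1/α).ne', Real.log_zero, mul_zero]
    · rw [hZdef]
      simp only [Real.log_rpow h0]
  have hlog_le : ∀ ω, logPlus |X ω| ≤ max (Real.log (Z ω)) 1 := by
    intro ω
    rw [key ω, logPlus]
    refine max_le ?_ (le_max_right _ _)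
    rcases le_or_gt 0 (Real.log |X ω|) with h | h
    · exact le_trans (le_mul_of_one_le_left h hαinv) (le_max_left _ _)
    · exact (h.le.trans zero_le_one).trans (le_max_right _ _)
  have hlog_ge : ∀ ω, max (Real.log (Z ω)) 1 ≤ (1/α) * logPlus |X ω| := by
    intro ω
    rw [key ω, logPlus]
    have hα' : (0:ℝ) ≤ 1/α := by positivity
    refine max_le (mul_le_mul_of_nonneg_left (le_max_left _ _) hα') ?_
    calc (1:ℝ) ≤ 1/α * 1 := by rwa [mul_one]
      _ ≤ 1/α * max (Real.log |X ω|) 1 := mul_le_mul_of_nonneg_left (le_max_right _ _) hα'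
  have hnn : ∀ ω, 0 ≤ Z ω * logPlus |X ω| :=
    fun ω => mul_nonneg (hZ0 ω) (zero_le_one.trans (hlp1 _))
  have hlpmeas : Measurable fun ω => logPlus |X ω| := by
    unfold logPlus
    exact (Real.measurable_log.comp hmeas.abs).max measurable_const
  constructor
  · -- forward
    intro hS
    rw [hSeq] at hS
    have hZlint : ∫⁻ ω, ENNReal.ofReal (Z ω) ∂ℙ < ⊤ := by
      have hb : ∀ ω, ENNReal.ofReal (Z ω) ≤ TailAux.cnt γ (Z ω) + 1 := by
        intro ω
        calc ENNReal.ofReal (Z ω) = ENNReal.ofReal ((Z ω - 1) + 1) := by ring_nf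
          _ ≤ ENNReal.ofReal (Z ω - 1) + ENNReal.ofReal 1 := ENNReal.ofReal_add_le
          _ ≤ TailAux.cnt γ (Z ω) + 1 := by
              rw [ENNReal.ofReal_one]
              exact add_le_add (TailAux.cnt_ge γ (Z ω)) le_rfl
      calc ∫⁻ ω, ENNReal.ofReal (Z ω) ∂ℙ
          ≤ ∫⁻ ω, (TailAux.cnt γ (Z ω) + 1) ∂ℙ := lintegral_mono hb
        _ = (∫⁻ ω, TailAux.cnt γ (Z ω) ∂ℙ) + 1 := by
            rw [lintegral_add_right _ measurable_const, lintegral_const, measure_univ, mul_one]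
        _ < ⊤ := ENNReal.add_lt_top.mpr ⟨hS, ENNReal.one_lt_top⟩
    have hZint : Integrable Z ℙ := by
      refine ⟨hZmeas.aestronglyMeasurable, ?_⟩
      rw [hasFiniteIntegral_iff_ofReal (Eventually.of_forall hZ0)]
      exact hZlint
    refine ⟨fun _ => hZint, fun hEq => ?_⟩
    have hγ1 : γ = 1 := by rw [hγdef, ← hEq, div_self hα0.ne']
    have hb : ∀ ω, ENNReal.ofReal (Z ω * logPlus |X ω|)
        ≤ 2 * TailAux.cnt γ (Z ω) + ENNReal.ofReal (2 * Z ω) := by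
      intro ω
      have h1 : Z ω * logPlus |X ω| ≤ Z ω * max (Real.log (Z ω)) 1 :=
        mul_le_mul_of_nonneg_left (hlog_le ω) (hZ0 ω)
      refine le_trans (ENNReal.ofReal_le_ofReal h1) ?_
      rcases max_cases (Real.log (Z ω)) 1 with ⟨hmax, hc⟩ | ⟨hmax, hc⟩
      · -- max = log Z, 1 ≤ log Z
        rw [hmax]
        have hz1 : (1:ℝ) ≤ Z ω := by
          by_contra hlt
          push_neg at hlt
          have := Real.log_nonpos (hZ0 ω) hlt.le
          linarith
        have hdecomp : Z ω * Real.log (Z ω)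
            = (Z ω * Real.log (Z ω) / 2 - Z ω) * 2 + 2 * Z ω := by ring
        rw [hdecomp]
        refine le_trans ENNReal.ofReal_add_le (add_le_add ?_ le_rfl)
        rw [ENNReal.ofReal_mul' (by norm_num : (0:ℝ) ≤ 2), ENNReal.ofReal_ofNat, mul_comm]
        refine mul_le_mul_right ?_ 2
        rw [hγ1]
        exact TailAux.cnt_one_ge hz1
      · -- max = 1
        rw [hmax, mul_one]
        refine le_trans (ENNReal.ofReal_le_ofReal ?_) le_add_self
        have := hZ0 ω
        linarith
    have hmeas2 : Measurable fun ω => ENNReal.ofReal (2 * Z ω) :=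
      ENNReal.measurable_ofReal.comp (hZmeas.const_mul 2)
    have hfin : ∫⁻ ω, ENNReal.ofReal (Z ω * logPlus |X ω|) ∂ℙ < ⊤ := by
      calc ∫⁻ ω, ENNReal.ofReal (Z ω * logPlus |X ω|) ∂ℙ
          ≤ ∫⁻ ω, (2 * TailAux.cnt γ (Z ω) + ENNReal.ofReal (2 * Z ω)) ∂ℙ :=
            lintegral_mono hb
        _ = (∫⁻ ω, 2 * TailAux.cnt γ (Z ω) ∂ℙ) + ∫⁻ ω, ENNReal.ofReal (2 * Z ω) ∂ℙ :=
            lintegral_add_right _ hmeas2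
        _ = 2 * (∫⁻ ω, TailAux.cnt γ (Z ω) ∂ℙ) + ∫⁻ ω, ENNReal.ofReal (2 * Z ω) ∂ℙ := by
            rw [lintegral_const_mul' 2 _ (by norm_num)]
        _ < ⊤ := by
            refine ENNReal.add_lt_top.mpr ⟨ENNReal.mul_lt_top (by norm_num) hS, ?_⟩
            have heq2 : ∀ ω, ENNReal.ofReal (2 * Z ω) = 2 * ENNReal.ofReal (Z ω) := by
              intro ω
              rw [ENNReal.ofReal_mul (by norm_num : (0:ℝ) ≤ 2), ENNReal.ofReal_ofNat]
            simp_rw [heq2]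
            rw [lintegral_const_mul' 2 _ (by norm_num)]
            exact ENNReal.mul_lt_top (by norm_num) hZlint
    refine ⟨(hZmeas.mul hlpmeas).aestronglyMeasurable, ?_⟩
    rw [hasFiniteIntegral_iff_ofReal (Eventually.of_forall hnn)]
    exact hfin
  · -- backward
    rintro ⟨h1, h2⟩
    rw [hSeq]
    rcases lt_or_eq_of_le hαβ with hlt | heq
    · have hInt := h1 hlt
      have hγgt : 1 < γ := by rw [hγdef]; exact (one_lt_div hα0).mpr hlt
      have hlint : ∫⁻ ω, ENNReal.ofReal (Z ω) ∂ℙ < ⊤ := by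
        have h3 := hInt.hasFiniteIntegral
        rwa [hasFiniteIntegral_iff_ofReal (Eventually.of_forall hZ0)] at h3
      calc ∫⁻ ω, TailAux.cnt γ (Z ω) ∂ℙ
          ≤ ∫⁻ ω, ENNReal.ofReal (Z ω) * TailAux.Cconst γ ∂ℙ :=
            lintegral_mono fun ω => TailAux.cnt_le_of_one_lt hγpos (hZ0 ω)
        _ = (∫⁻ ω, ENNReal.ofReal (Z ω) ∂ℙ) * TailAux.Cconst γ :=
            lintegral_mul_const' _ _ (TailAux.Cconst_lt_top hγgt).ne
        _ < ⊤ := ENNReal.mul_lt_top hlint (TailAux.Cconst_lt_top hγgt)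
    · have hInt := h2 heq
      have hγ1 : γ = 1 := by rw [hγdef, ← heq, div_self hα0.ne']
      have hlint : ∫⁻ ω, ENNReal.ofReal (Z ω * logPlus |X ω|) ∂ℙ < ⊤ := by
        have h3 := hInt.hasFiniteIntegral
        rwa [hasFiniteIntegral_iff_ofReal (Eventually.of_forall hnn)] at h3
      have hb : ∀ ω, TailAux.cnt γ (Z ω)
          ≤ ENNReal.ofReal ((2/α) * (Z ω * logPlus |X ω|)) := by
        intro ω
        rw [hγ1]
        refine le_trans (TailAux.cnt_one_le (hZ0 ω)) (ENNReal.ofReal_le_ofReal ?_)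
        have h4 := hlog_ge ω
        have h5 : (0:ℝ) ≤ 2 * Z ω := by
          have := hZ0 ω; linarith
        calc 2 * Z ω * max (Real.log (Z ω)) 1
            ≤ 2 * Z ω * ((1/α) * logPlus |X ω|) := mul_le_mul_of_nonneg_left h4 h5
          _ = (2/α) * (Z ω * logPlus |X ω|) := by ring
      calc ∫⁻ ω, TailAux.cnt γ (Z ω) ∂ℙ
          ≤ ∫⁻ ω, ENNReal.ofReal ((2/α) * (Z ω * logPlus |X ω|)) ∂ℙ := lintegral_mono hb
        _ = ∫⁻ ω, ENNReal.ofReal (2/α) * ENNReal.ofReal (Z ω * logPlus |X ω|) ∂ℙ := by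
            simp_rw [ENNReal.ofReal_mul (by positivity : (0:ℝ) ≤ 2/α)]
        _ = ENNReal.ofReal (2/α) * ∫⁻ ω, ENNReal.ofReal (Z ω * logPlus |X ω|) ∂ℙ :=
            lintegral_const_mul' _ _ ENNReal.ofReal_ne_top
        _ < ⊤ := ENNReal.mul_lt_top ENNReal.ofReal_lt_top hlint
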